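/- Let (Ω,ℱ,ℙ,(θ_t)_{t∈ℝ}) be a metric dynamical system and let M₁ ∈ ℬ([0,∞)) ⊗ ℱ be a set of full λ ⊗ ℙ measure (λ Lebesgue measure on [0,∞)). Define Ω̃ := {ω ∈ Ω : (s+r, θ_{−r}ω) ∈ M₁ for λ⊗λ-almost all (s,r) ∈ ℝ² with s+r ≥ 0}. Then Ω̃ ∈ ℱ, ℙ(Ω̃) = 1, and Ω̃ is invariant under θ_u for every u ∈ ℝ. -/

import Mathlib

open Set MeasureTheory

/-- For an MDS and a product-measurable set M₁ ⊆ [0,∞) × Ω of full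
λ ⊗ ℙ measure, the set Ω̃ of all ω such that (s+r, θ_{-r}ω) ∈ M₁ for λ⊗λ-a.a.
(s,r) with s + r ≥ 0 is measurable, has full ℙ-measure, and is θ-invariant. -/
theorem tildeOmega_full_and_invariant
    {Ω : Type*} [MeasurableSpace Ω] (ℙ : Measure Ω) [IsProbabilityMeasure ℙ]
    (θ : ℝ → Ω → Ω) (hθ0 : θ 0 = id) (hθadd : ∀ s t : ℝ, θ (t + s) = θ t ∘ θ s)
    (hθmeas : Measurable fun p : ℝ × Ω => θ p.1 p.2)
    (hθmp : ∀ t : ℝ, MeasurePreserving (θ t) ℙ ℙ)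
    (M₁ : Set (ℝ × Ω)) (hM₁ : MeasurableSet M₁)
    (hfull : ((volume.restrict (Ici (0 : ℝ))).prod ℙ) M₁ᶜ = 0)
    (Ωt : Set Ω)
    (hΩt : Ωt = {ω : Ω |
      ∀ᵐ p : ℝ × ℝ ∂(volume.prod volume), 0 ≤ p.1 + p.2 →
        (p.1 + p.2, θ (-p.2) ω) ∈ M₁}) :
    MeasurableSet Ωt ∧ ℙ Ωt = 1 ∧ ∀ u : ℝ, θ u ⁻¹' Ωt = Ωt := by
  set lam2 : Measure (ℝ × ℝ) := (volume : Measure ℝ).prod volume with hlam2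
  -- the global "good" set
  set S : Set ((ℝ × ℝ) × Ω) :=
    {q | 0 ≤ q.1.1 + q.1.2 → (q.1.1 + q.1.2, θ (-q.1.2) q.2) ∈ M₁} with hSdef
  have hg : Measurable fun q : (ℝ × ℝ) × Ω => (q.1.1 + q.1.2, θ (-q.1.2) q.2) :=
    (measurable_fst.fst.add measurable_fst.snd).prodMk
      (hθmeas.comp (measurable_fst.snd.neg.prodMk measurable_snd))
  have hS : MeasurableSet S := by
    have : S = {q : (ℝ × ℝ) × Ω | 0 ≤ q.1.1 + q.1.2}ᶜ ∪
        ((fun q : (ℝ × ℝ) × Ω => (q.1.1 + q.1.2, θ (-q.1.2) q.2)) ⁻¹' M₁) := by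
      ext q; simp [hSdef, imp_iff_not_or]
    rw [this]
    exact ((measurableSet_le measurable_const
      (measurable_fst.fst.add measurable_fst.snd)).compl).union (hg hM₁)
  -- sections of S over ω
  have hSω : ∀ ω : Ω, MeasurableSet {p : ℝ × ℝ | (p, ω) ∈ S} := by
    intro ω
    have : {p : ℝ × ℝ | (p, ω) ∈ S} = (fun p : ℝ × ℝ => (p, ω)) ⁻¹' S := rfl
    rw [this]
    exact hS.preimage (measurable_id.prodMk measurable_const)
  -- membership in Ωt expressed via sections of S
  have hmem : ∀ ω : Ω, ω ∈ Ωt ↔ lam2 ((fun p : ℝ × ℝ => (p, ω)) ⁻¹' Sᶜ) = 0 := by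
    intro ω
    rw [hΩt]
    simp only [mem_setOf_eq]
    exact ae_iff
  -- measurability of Ωt
  have hΩtmeas : MeasurableSet Ωt := by
    have hmf : Measurable fun ω => lam2 ((fun p : ℝ × ℝ => (p, ω)) ⁻¹' Sᶜ) :=
      measurable_measure_prodMk_right hS.compl
    have : Ωt = (fun ω => lam2 ((fun p : ℝ × ℝ => (p, ω)) ⁻¹' Sᶜ)) ⁻¹' {0} := by
      ext ω; simpa using hmem ω
    rw [this]
    exact hmf (measurableSet_singleton 0)
  refine ⟨hΩtmeas, ?_, ?_⟩
  · -- full measure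
    -- the function N t = ℙ (section of M₁ᶜ at t)
    set N : ℝ → ENNReal := fun t => ℙ (Prod.mk t ⁻¹' M₁ᶜ) with hN
    have hNmeas : Measurable N := measurable_measure_prodMk_left hM₁.compl
    have hN0 : ∀ᵐ t ∂(volume : Measure ℝ), 0 ≤ t → N t = 0 := by
      have h1 : ∫⁻ t, N t ∂(volume.restrict (Ici (0 : ℝ))) = 0 := by
        rw [← Measure.prod_apply hM₁.compl]
        exact hfull
      have h2 : ∀ᵐ t ∂(volume.restrict (Ici (0 : ℝ))), N t = 0 :=
        (lintegral_eq_zero_iff hNmeas).mp h1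
      exact (ae_restrict_iff' measurableSet_Ici).mp h2
    -- the set of bad times has measure 0; pull back by addition
    have hbadsum : ∀ᵐ p : ℝ × ℝ ∂lam2, 0 ≤ p.1 + p.2 → N (p.1 + p.2) = 0 := by
      set D : Set ℝ := {t | ¬ (0 ≤ t → N t = 0)} with hD
      have hDmeas : MeasurableSet D := by
        have : D = Ici (0 : ℝ) ∩ (N ⁻¹' {0})ᶜ := by
          ext t; simp [hD, _root_.not_imp]
        rw [this]
        exact measurableSet_Ici.inter (hNmeas (measurableSet_singleton 0)).compl
      have hD0 : (volume : Measure ℝ) D = 0 := ae_iff.mp hN0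
      rw [ae_iff]
      have hset : {p : ℝ × ℝ | ¬ (0 ≤ p.1 + p.2 → N (p.1 + p.2) = 0)} =
          {p : ℝ × ℝ | p.1 + p.2 ∈ D} := rfl
      rw [hset]
      have hmeasE : MeasurableSet {p : ℝ × ℝ | p.1 + p.2 ∈ D} :=
        hDmeas.preimage (measurable_fst.add measurable_snd)
      rw [hlam2, Measure.prod_apply hmeasE]
      have hzero : ∀ s : ℝ, (volume : Measure ℝ) {r : ℝ | s + r ∈ D} = 0 := by
        intro s
        have : {r : ℝ | s + r ∈ D} = (fun r => s + r) ⁻¹' D := rfl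
        rw [this, measure_preimage_add]
        exact hD0
      simp only [preimage_setOf_eq]
      simp only [hzero, lintegral_zero]
    -- a.e. section of Sᶜ in the first variable is ℙ-null
    have hsec : ∀ᵐ p : ℝ × ℝ ∂lam2, ℙ (Prod.mk p ⁻¹' Sᶜ) = 0 := by
      filter_upwards [hbadsum] with p hp
      by_cases h : 0 ≤ p.1 + p.2
      · have hEq : Prod.mk p ⁻¹' Sᶜ = θ (-p.2) ⁻¹' (Prod.mk (p.1 + p.2) ⁻¹' M₁ᶜ) := by
          ext ω; simp [hSdef, h]
        rw [hEq, (hθmp (-p.2)).measure_preimage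
          ((hM₁.compl.preimage (measurable_prodMk_left)).nullMeasurableSet)]
        exact hp h
      · have hEq : Prod.mk p ⁻¹' Sᶜ = (∅ : Set Ω) := by
          ext ω; simp [hSdef, h]
        simp [hEq]
    -- hence Sᶜ is null for lam2 ⊗ ℙ
    have hSnull : (lam2.prod ℙ) Sᶜ = 0 := by
      rw [Measure.prod_apply hS.compl]
      rw [lintegral_congr_ae hsec, lintegral_zero]
    -- swap to get a.e. ω the a.e. statement
    have hswap : (ℙ.prod lam2) (Prod.swap ⁻¹' Sᶜ) = 0 := by
      rw [← Measure.map_apply measurable_swap hS.compl, Measure.prod_swap]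
      exact hSnull
    have hae : ∀ᵐ q : Ω × (ℝ × ℝ) ∂(ℙ.prod lam2), (q.2, q.1) ∈ S := by
      rw [ae_iff]
      convert hswap using 2
      rfl
    have hae2 : ∀ᵐ ω ∂ℙ, ∀ᵐ p ∂lam2, (p, ω) ∈ S := Measure.ae_ae_of_ae_prod hae
    have haemem : ∀ᵐ ω ∂ℙ, ω ∈ Ωt := by
      filter_upwards [hae2] with ω hω
      rw [hmem ω]
      exact ae_iff.mp hω
    rw [← prob_compl_eq_zero_iff hΩtmeas]
    exact ae_iff.mp haemem
  · -- invariance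
    intro u
    ext ω
    simp only [mem_preimage]
    have hT : MeasurePreserving (Prod.map (fun s : ℝ => s + u) (fun r : ℝ => r + (-u))) lam2 lam2 :=
      (measurePreserving_add_right volume u).prod (measurePreserving_add_right volume (-u))
    have hT' : MeasurePreserving (Prod.map (fun s : ℝ => s + (-u)) (fun r : ℝ => r + u)) lam2 lam2 :=
      (measurePreserving_add_right volume (-u)).prod (measurePreserving_add_right volume u)
    constructor
    · intro h
      rw [hΩt] at h ⊢
      simp only [mem_setOf_eq] at h ⊢
      rw [← hT'.map_eq] at h
      replace h := (ae_map_iff hT'.measurable.aemeasurable (hSω (θ u ω))).mp h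
      filter_upwards [h] with p hp h0
      have h0' : (0 : ℝ) ≤ (p.1 + -u) + (p.2 + u) := by linarith
      have hm : ((p.1 + -u) + (p.2 + u), θ (-(p.2 + u)) (θ u ω)) ∈ M₁ := hp h0'
      have e1 : (p.1 + -u) + (p.2 + u) = p.1 + p.2 := by ring
      have e2 : θ (-(p.2 + u)) (θ u ω) = θ (-p.2) ω := by
        have e3 : -p.2 = -(p.2 + u) + u := by ring
        rw [e3, hθadd u (-(p.2 + u))]
        rfl
      rw [e1, e2] at hm
      exact hm
    · intro h
      rw [hΩt] at h ⊢
      simp only [mem_setOf_eq] at h ⊢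
      rw [← hT.map_eq] at h
      replace h := (ae_map_iff hT.measurable.aemeasurable (hSω ω)).mp h
      filter_upwards [h] with p hp h0
      have h0' : (0 : ℝ) ≤ (p.1 + u) + (p.2 + -u) := by linarith
      have hm : ((p.1 + u) + (p.2 + -u), θ (-(p.2 + -u)) ω) ∈ M₁ := hp h0'
      have e1 : (p.1 + u) + (p.2 + -u) = p.1 + p.2 := by ring
      have e2 : θ (-(p.2 + -u)) ω = θ (-p.2) (θ u ω) := by
        have e3 : -(p.2 + -u) = -p.2 + u := by ring
        rw [e3, hθadd u (-p.2)]
        rfl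
      rw [e1, e2] at hm
      exact hm
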